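/- Let $\{F_\alpha\}_{\alpha=1}^{d^2-1}$ be Hermitian traceless $d\times d$ matrices with $\mathrm{Tr}(F_\alpha F_\beta) = \delta_{\alpha\beta}$, let $F = \sum_{\alpha=1}^{d^2-1} F_\alpha$, and define $P_\alpha = \frac{1}{d^2} I + t[F - d(d+1)F_\alpha]$ for $\alpha = 1,\dots,d^2-1$ and $P_{d^2} = \frac{1}{d^2} I + t(d+1)F$. Then $\sum_{\alpha=1}^{d^2} P_\alpha = I$, each $P_\alpha$ is Hermitian with $\mathrm{Tr}(P_\alpha) = 1/d$, $\mathrm{Tr}(P_\alpha^2) = \frac{1}{d^3} + t^2(d-1)(d+1)^3$ for every $\alpha$, and $\mathrm{Tr}(P_\alpha P_\beta) = \frac{1-da}{d(d^2-1)}$ for $\alpha \neq \beta$, where $a = \frac{1}{d^3} + t^2(d-1)(d+1)^3$. -/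

import Mathlib

open Matrix

theorem gsic_construction (d : ℕ) (hd : 2 ≤ d) (t : ℝ)
    (F : Fin (d ^ 2 - 1) → Matrix (Fin d) (Fin d) ℂ)
    (hFherm : ∀ α, (F α).IsHermitian)
    (hFtr : ∀ α, (F α).trace = 0)
    (hFon : ∀ α β, (F α * F β).trace = if α = β then 1 else 0)
    (Ftot : Matrix (Fin d) (Fin d) ℂ) (hFtot : Ftot = ∑ α, F α)
    (P : Fin (d ^ 2 - 1) → Matrix (Fin d) (Fin d) ℂ)
    (hP : ∀ α, P α = ((1 / (d ^ 2) : ℝ) : ℂ) • (1 : Matrix (Fin d) (Fin d) ℂ)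
      + (t : ℂ) • (Ftot - ((d * (d + 1) : ℝ) : ℂ) • F α))
    (Plast : Matrix (Fin d) (Fin d) ℂ)
    (hPlast : Plast = ((1 / (d ^ 2) : ℝ) : ℂ) • (1 : Matrix (Fin d) (Fin d) ℂ)
      + ((t * (d + 1) : ℝ) : ℂ) • Ftot)
    (a : ℝ) (ha : a = 1 / d ^ 3 + t ^ 2 * (d - 1) * (d + 1) ^ 3) :
    ((∑ α, P α) + Plast = 1) ∧
    (∀ α, (P α).IsHermitian) ∧ Plast.IsHermitian ∧
    (∀ α, (P α).trace = ((1 / d : ℝ) : ℂ)) ∧ Plast.trace = ((1 / d : ℝ) : ℂ) ∧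
    (∀ α, (P α * P α).trace = (a : ℂ)) ∧ (Plast * Plast).trace = (a : ℂ) ∧
    (∀ α β, α ≠ β →
      (P α * P β).trace = (((1 - d * a) / (d * (d ^ 2 - 1)) : ℝ) : ℂ)) ∧
    (∀ α, (P α * Plast).trace = (((1 - d * a) / (d * (d ^ 2 - 1)) : ℝ) : ℂ)) := by
  have hd1 : 1 ≤ d ^ 2 := by nlinarith
  have hd0R : (d : ℝ) ≠ 0 := Nat.cast_ne_zero.mpr (by omega)
  have hd0C : (d : ℂ) ≠ 0 := Nat.cast_ne_zero.mpr (by omega)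
  have hd2 : (d : ℝ) ^ 2 - 1 ≠ 0 := by
    have : (2 : ℝ) ≤ d := by exact_mod_cast hd
    nlinarith
  have hd2C : (d : ℂ) ^ 2 - 1 ≠ 0 := by
    have h := Complex.ofReal_ne_zero.mpr hd2
    push_cast at h
    exact h
  have hN : ((d ^ 2 - 1 : ℕ) : ℂ) = (d : ℂ) ^ 2 - 1 := by
    rw [Nat.cast_sub hd1]; push_cast; ring
  have htr1 : (1 : Matrix (Fin d) (Fin d) ℂ).trace = (d : ℂ) := by
    simp [Matrix.trace_one]
  have htrFtot : Ftot.trace = 0 := by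
    rw [hFtot, Matrix.trace_sum]; simp [hFtr]
  have hA : ∀ α, (Ftot * F α).trace = 1 := by
    intro α
    rw [hFtot, Finset.sum_mul, Matrix.trace_sum]
    simp [hFon]
  have hB : ∀ α, (F α * Ftot).trace = 1 := by
    intro α
    rw [hFtot, Finset.mul_sum, Matrix.trace_sum]
    simp [hFon]
  have hC : (Ftot * Ftot).trace = (d : ℂ) ^ 2 - 1 := by
    rw [hFtot, Finset.sum_mul, Matrix.trace_sum]
    simp only [Finset.mul_sum, Matrix.trace_sum, hFon]
    simp only [Finset.sum_ite_eq, Finset.mem_univ, if_true, Finset.sum_const,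
      Finset.card_univ, Fintype.card_fin, nsmul_eq_mul, mul_one, hN]
  have hFtotherm : Ftot.IsHermitian := by
    show Ftotᴴ = Ftot
    rw [hFtot, Matrix.conjTranspose_sum]
    exact Finset.sum_congr rfl fun α _ => (hFherm α).eq
  refine ⟨?_, ?_, ?_, ?_, ?_, ?_, ?_, ?_, ?_⟩
  · -- sum to identity
    simp only [hP, hPlast]
    rw [Finset.sum_add_distrib, Finset.sum_const, Finset.card_univ, Fintype.card_fin,
      ← Finset.smul_sum, Finset.sum_sub_distrib, Finset.sum_const, Finset.card_univ,
      Fintype.card_fin, ← Finset.smul_sum, ← hFtot]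
    match_scalars <;> push_cast [hN] <;> (try field_simp) <;> (try ring)
  · intro α
    show _ᴴ = _
    rw [hP α]
    simp [Matrix.conjTranspose_add, Matrix.conjTranspose_smul, Matrix.conjTranspose_sub,
      Matrix.conjTranspose_one, Complex.star_def, Complex.conj_ofReal,
      (hFherm α).eq, hFtotherm.eq]
  · show _ᴴ = _
    rw [hPlast]
    simp [Matrix.conjTranspose_add, Matrix.conjTranspose_smul, Matrix.conjTranspose_one,
      Complex.star_def, Complex.conj_ofReal, hFtotherm.eq]
  · intro α
    rw [hP α]
    simp only [Matrix.trace_add, Matrix.trace_smul, Matrix.trace_sub, htr1, htrFtot, hFtr]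
    push_cast
    field_simp
    simp [hd0C]
    rw [mul_comm, mul_assoc, ← sq, inv_mul_cancel₀ (pow_ne_zero 2 hd0C)]
  · rw [hPlast]
    simp only [Matrix.trace_add, Matrix.trace_smul, htr1, htrFtot]
    push_cast
    field_simp
    simp [hd0C]
    rw [mul_comm, mul_assoc, ← sq, inv_mul_cancel₀ (pow_ne_zero 2 hd0C)]
  · intro α
    rw [hP α]
    simp only [Matrix.add_mul, Matrix.mul_add, Matrix.sub_mul, Matrix.mul_sub,
      smul_mul_assoc, mul_smul_comm, Matrix.one_mul, Matrix.mul_one,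
      Matrix.trace_add, Matrix.trace_sub, Matrix.trace_smul, smul_eq_mul,
      htr1, htrFtot, hFtr, hA, hB, hC, hFon, if_pos rfl]
    rw [ha]
    push_cast
    field_simp
    ring
  · rw [hPlast]
    simp only [Matrix.add_mul, Matrix.mul_add,
      smul_mul_assoc, mul_smul_comm, Matrix.one_mul, Matrix.mul_one,
      Matrix.trace_add, Matrix.trace_smul, smul_eq_mul, htr1, htrFtot, hC]
    rw [ha]
    push_cast
    field_simp
    ring
  · intro α β hne
    rw [hP α, hP β]
    simp only [Matrix.add_mul, Matrix.mul_add, Matrix.sub_mul, Matrix.mul_sub,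
      smul_mul_assoc, mul_smul_comm, Matrix.one_mul, Matrix.mul_one,
      Matrix.trace_add, Matrix.trace_sub, Matrix.trace_smul, smul_eq_mul,
      htr1, htrFtot, hFtr, hA, hB, hC, hFon, if_neg hne]
    rw [ha]
    push_cast
    field_simp [hd0C, hd2C]
    ring
  · intro α
    rw [hP α, hPlast]
    simp only [Matrix.add_mul, Matrix.mul_add, Matrix.sub_mul, Matrix.mul_sub,
      smul_mul_assoc, mul_smul_comm, Matrix.one_mul, Matrix.mul_one,
      Matrix.trace_add, Matrix.trace_sub, Matrix.trace_smul, smul_eq_mul,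
      htr1, htrFtot, hFtr, hA, hB, hC]
    rw [ha]
    push_cast
    field_simp [hd0C, hd2C]
    ring
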